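/- arXiv:2106.05064 — 2 statements merged into one kernel-verified Lean document; each statement's English description precedes it below -/
import Mathlib

section
/- The subspace of strongly maximal elements of a continuous dcpo D with the relative Scott topology is regular: for every strongly maximal x and every Scott open U containing x, there exists a Scott closed set C and a Scott open W with x ∈ W ⊆ C and C ∩ StrongMax(D) ⊆ U ∩ StrongMax(D). -/
open Classical

def IsDcpo (D : Type*) [PartialOrder D] : Prop :=
  ∀ S : Set D, S.Nonempty → DirectedOn (· ≤ ·) S → ∃ s, IsLUB S s

def WayBelow {D : Type*} [PartialOrder D] (x y : D) : Prop :=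
  ∀ S : Set D, S.Nonempty → DirectedOn (· ≤ ·) S →
    ∀ s, IsLUB S s → y ≤ s → ∃ a ∈ S, x ≤ a

def ScottOpen {D : Type*} [PartialOrder D] (U : Set D) : Prop :=
  IsUpperSet U ∧ ∀ S : Set D, S.Nonempty → DirectedOn (· ≤ ·) S →
    ∀ s, IsLUB S s → s ∈ U → ∃ a ∈ S, a ∈ U

def ScottClosed {D : Type*} [PartialOrder D] (C : Set D) : Prop :=
  IsLowerSet C ∧ ∀ S : Set D, S.Nonempty → DirectedOn (· ≤ ·) S →
    S ⊆ C → ∀ s, IsLUB S s → s ∈ C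

def IsBasis {D : Type*} [PartialOrder D] (B : Set D) : Prop :=
  ∀ x : D, (B ∩ {y | WayBelow y x}).Nonempty ∧
    DirectedOn (· ≤ ·) (B ∩ {y | WayBelow y x}) ∧
    IsLUB (B ∩ {y | WayBelow y x}) x

def DcpoContinuous (D : Type*) [PartialOrder D] : Prop :=
  ∀ x : D, ({y | WayBelow y x} : Set D).Nonempty ∧
    DirectedOn (· ≤ ·) ({y | WayBelow y x} : Set D) ∧
    IsLUB ({y | WayBelow y x} : Set D) x

def DcpoAlgebraic (D : Type*) [PartialOrder D] : Prop :=
  ∀ x : D, ({c | WayBelow c c ∧ c ≤ x} : Set D).Nonempty ∧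
    DirectedOn (· ≤ ·) ({c | WayBelow c c ∧ c ≤ x} : Set D) ∧
    IsLUB ({c | WayBelow c c ∧ c ≤ x} : Set D) x

def HausdorffSep {D : Type*} [PartialOrder D] (x y : D) : Prop :=
  ∃ U V : Set D, ScottOpen U ∧ ScottOpen V ∧ x ∈ U ∧ y ∈ V ∧ U ∩ V = ∅

def StronglyMaximal {D : Type*} [PartialOrder D] (x : D) : Prop :=
  ∀ u v : D, WayBelow u v → WayBelow u x ∨ HausdorffSep v x

def Sharp {D : Type*} [PartialOrder D] (x : D) : Prop :=
  ∀ y z : D, WayBelow y z → WayBelow y x ∨ ∃ U : Set D, ScottOpen U ∧ z ∈ U ∧ x ∉ U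

noncomputable def step {D E : Type*} [PartialOrder D] [PartialOrder E] [OrderBot E]
    (x : D) (y : E) : D → E :=
  fun d => if x ≤ d then y else ⊥

lemma wb_le {D : Type*} [PartialOrder D] {u v : D} (h : WayBelow u v) : u ≤ v := by
  obtain ⟨a, ha, hua⟩ := h {v} ⟨v, rfl⟩
    (by intro a ha b hb; exact ⟨v, rfl, by simp_all, by simp_all⟩) v isLUB_singleton le_rfl
  simp only [Set.mem_singleton_iff] at ha; subst ha; exact hua

lemma wb_mono_right {D : Type*} [PartialOrder D] {u v w : D}
    (h : WayBelow u v) (hvw : v ≤ w) : WayBelow u w := by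
  intro S hS hdir s hlub hws
  exact h S hS hdir s hlub (hvw.trans hws)

lemma le_wb {D : Type*} [PartialOrder D] {u v w : D}
    (huv : u ≤ v) (h : WayBelow v w) : WayBelow u w := by
  intro S hS hdir s hlub hws
  obtain ⟨a, ha, hva⟩ := h S hS hdir s hlub hws
  exact ⟨a, ha, huv.trans hva⟩

lemma wb_interp {D : Type*} [PartialOrder D] (hc : DcpoContinuous D) {u x : D}
    (h : WayBelow u x) : ∃ v, WayBelow u v ∧ WayBelow v x := by
  set T : Set D := {d | ∃ w, WayBelow d w ∧ WayBelow w x} with hT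
  obtain ⟨⟨w0, hw0⟩, hdirx, hlubx⟩ := hc x
  have hTne : T.Nonempty := by
    obtain ⟨⟨d0, hd0⟩, _, _⟩ := hc w0
    exact ⟨d0, w0, hd0, hw0⟩
  have hTdir : DirectedOn (· ≤ ·) T := by
    rintro d1 ⟨w1, hd1, hw1⟩ d2 ⟨w2, hd2, hw2⟩
    obtain ⟨w3, hw3, hw13, hw23⟩ := hdirx w1 hw1 w2 hw2
    obtain ⟨_, hdirw3, _⟩ := hc w3
    obtain ⟨d3, hd3, hd13, hd23⟩ := hdirw3 d1 (wb_mono_right hd1 hw13) d2 (wb_mono_right hd2 hw23)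
    exact ⟨d3, ⟨w3, hd3, hw3⟩, hd13, hd23⟩
  have hTlub : IsLUB T x := by
    constructor
    · rintro d ⟨w, hd, hw⟩
      exact (wb_le hd).trans (wb_le hw)
    · intro b hb
      apply hlubx.2
      intro w hw
      obtain ⟨_, _, hlubw⟩ := hc w
      apply hlubw.2
      intro d hd
      exact hb ⟨w, hd, hw⟩
  obtain ⟨d, ⟨w, hdw, hwx⟩, hud⟩ := h T hTne hTdir x hTlub le_rfl
  exact ⟨w, le_wb hud hdw, hwx⟩

lemma wayUp_open {D : Type*} [PartialOrder D] (hc : DcpoContinuous D) (v : D) :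
    ScottOpen {z | WayBelow v z} := by
  constructor
  · intro a b hab ha
    exact wb_mono_right ha hab
  · intro S hS hdir s hlub hs
    obtain ⟨w, hvw, hws⟩ := wb_interp hc hs
    obtain ⟨a, ha, hwa⟩ := hws S hS hdir s hlub le_rfl
    exact ⟨a, ha, wb_mono_right hvw hwa⟩

theorem stmt18 {D : Type*} [PartialOrder D] (hD : IsDcpo D)
    (hc : DcpoContinuous D) (x : D) (hx : StronglyMaximal x)
    (U : Set D) (hU : ScottOpen U) (hxU : x ∈ U) :
    ∃ C W : Set D, ScottClosed C ∧ ScottOpen W ∧ x ∈ W ∧ W ⊆ C ∧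
      C ∩ {z : D | StronglyMaximal z} ⊆ U ∩ {z : D | StronglyMaximal z} := by
  obtain ⟨hne, hdir, hlub⟩ := hc x
  obtain ⟨u, hu, huU⟩ := hU.2 {y | WayBelow y x} hne hdir x hlub hxU
  obtain ⟨v, huv, hvx⟩ := wb_interp hc hu
  refine ⟨{z | ¬ HausdorffSep v z}, {z | WayBelow v z}, ?_, wayUp_open hc v, hvx, ?_, ?_⟩
  · constructor
    · intro a b hab hb ha
      obtain ⟨A, B, hA, hB, hvA, haB, hAB⟩ := ha
      exact hb ⟨A, B, hA, hB, hvA, hB.1 hab haB, hAB⟩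
    · intro S hS hdir' hSC s hlub' hsep
      obtain ⟨A, B, hA, hB, hvA, hsB, hAB⟩ := hsep
      obtain ⟨a, haS, haB⟩ := hB.2 S hS hdir' s hlub' hsB
      exact hSC haS ⟨A, B, hA, hB, hvA, haB, hAB⟩
  · intro z hz hsep
    obtain ⟨A, B, hA, hB, hvA, hzB, hAB⟩ := hsep
    have : z ∈ A := hA.1 (wb_le hz) hvA
    have : z ∈ A ∩ B := ⟨this, hzB⟩
    simp [hAB] at this
  · rintro z ⟨hzC, hzM⟩
    refine ⟨?_, hzM⟩
    rcases hzM u v huv with h | h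
    · exact hU.1 (wb_le h) huU
    · exact absurd h hzC
end

section
/- An element x of a continuous dcpo D is strongly maximal if and only if x is sharp and every subbasic Lawson open neighbourhood of x of the form {d ∈ D | there is a Scott open containing y but not d} (for y ∈ D) contains a Scott open neighbourhood of x. -/
open Classical

lemma wayBelow_le {D : Type*} [PartialOrder D] {a b : D} (h : WayBelow a b) : a ≤ b := by
  obtain ⟨c, hc, hac⟩ := h {b} ⟨b, rfl⟩
    (fun p hp q hq => ⟨b, rfl, le_of_eq hp, le_of_eq hq⟩) b isLUB_singleton le_rfl
  rw [Set.mem_singleton_iff] at hc; exact hc ▸ hac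

lemma le_wayBelow {D : Type*} [PartialOrder D] {a b c : D} (h : a ≤ b) (hbc : WayBelow b c) :
    WayBelow a c := fun S hS hdir s hlub hcs => by
  obtain ⟨d, hd, hbd⟩ := hbc S hS hdir s hlub hcs
  exact ⟨d, hd, h.trans hbd⟩

lemma wayBelow_le' {D : Type*} [PartialOrder D] {a b c : D} (h : WayBelow a b) (hbc : b ≤ c) :
    WayBelow a c := fun S hS hdir s hlub hcs => h S hS hdir s hlub (hbc.trans hcs)

lemma interpolation {D : Type*} [PartialOrder D] (hc : DcpoContinuous D) {u v : D}
    (huv : WayBelow u v) : ∃ w, WayBelow u w ∧ WayBelow w v := by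
  set S : Set D := {a | ∃ b, WayBelow a b ∧ WayBelow b v} with hS
  obtain ⟨⟨b, hb⟩, hdirv, hlubv⟩ := hc v
  -- S nonempty
  obtain ⟨⟨a, ha⟩, _, _⟩ := hc b
  have hne : S.Nonempty := ⟨a, b, ha, hb⟩
  -- S directed
  have hdir : DirectedOn (· ≤ ·) S := by
    rintro a₁ ⟨b₁, hab₁, hb₁⟩ a₂ ⟨b₂, hab₂, hb₂⟩
    obtain ⟨b₃, hb₃, hle₁, hle₂⟩ := hdirv b₁ hb₁ b₂ hb₂
    obtain ⟨_, hdirb₃, _⟩ := hc b₃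
    obtain ⟨a₃, ha₃, hle₁', hle₂'⟩ := hdirb₃ a₁ (wayBelow_le' hab₁ hle₁) a₂ (wayBelow_le' hab₂ hle₂)
    exact ⟨a₃, ⟨b₃, ha₃, hb₃⟩, hle₁', hle₂'⟩
  -- IsLUB S v
  have hlub : IsLUB S v := by
    constructor
    · rintro a ⟨b, hab, hbv⟩
      exact (wayBelow_le hab).trans (wayBelow_le hbv)
    · intro t ht
      refine hlubv.2 fun b hb => ?_
      obtain ⟨_, _, hlubb⟩ := hc b
      exact hlubb.2 fun a ha => ht ⟨b, ha, hb⟩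
  obtain ⟨a, ⟨w, haw, hwv⟩, hua⟩ := huv S hne hdir v hlub le_rfl
  exact ⟨w, le_wayBelow hua haw, hwv⟩

lemma scottOpen_wayUp {D : Type*} [PartialOrder D] (hc : DcpoContinuous D) (w : D) :
    ScottOpen {d | WayBelow w d} := by
  constructor
  · intro d d' hdd' hwd
    exact wayBelow_le' hwd hdd'
  · intro S hS hdir s hlub hws
    obtain ⟨c, hwc, hcs⟩ := interpolation hc hws
    obtain ⟨a, ha, hca⟩ := hcs S hS hdir s hlub le_rfl
    exact ⟨a, ha, wayBelow_le' hwc hca⟩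

theorem stmt19 {D : Type*} [PartialOrder D] (hD : IsDcpo D)
    (hc : DcpoContinuous D) (x : D) :
    StronglyMaximal x ↔
      Sharp x ∧
      ∀ y : D, x ∈ {d : D | ∃ U : Set D, ScottOpen U ∧ y ∈ U ∧ d ∉ U} →
        ∃ W : Set D, ScottOpen W ∧ x ∈ W ∧
          W ⊆ {d : D | ∃ U : Set D, ScottOpen U ∧ y ∈ U ∧ d ∉ U} := by
  constructor
  · intro hsm
    constructor
    · intro y z hyz
      rcases hsm y z hyz with h | ⟨U, V, hU, hV, hzU, hxV, hdisj⟩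
      · exact Or.inl h
      · refine Or.inr ⟨U, hU, hzU, fun hxU => ?_⟩
        exact Set.eq_empty_iff_forall_notMem.mp hdisj x ⟨hxU, hxV⟩
    · rintro y ⟨U, hU, hyU, hxU⟩
      obtain ⟨hne, hdir, hlub⟩ := hc y
      obtain ⟨a, ha, haU⟩ := hU.2 _ hne hdir y hlub hyU
      rcases hsm a y ha with h | ⟨U', V', hU', hV', hyU', hxV', hdisj⟩
      · exact absurd (hU.1 (wayBelow_le h) haU) hxU
      · refine ⟨V', hV', hxV', fun d hd => ⟨U', hU', hyU', fun hdU' => ?_⟩⟩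
        exact Set.eq_empty_iff_forall_notMem.mp hdisj d ⟨hdU', hd⟩
  · rintro ⟨hsh, hnb⟩ u v huv
    obtain ⟨w, huw, hwv⟩ := interpolation hc huv
    rcases hsh u w huw with h | ⟨U, hU, hwU, hxU⟩
    · exact Or.inl h
    · obtain ⟨W, hW, hxW, hWsub⟩ := hnb w ⟨U, hU, hwU, hxU⟩
      refine Or.inr ⟨{d | WayBelow w d}, W, scottOpen_wayUp hc w, hW, hwv, hxW, ?_⟩
      ext d
      simp only [Set.mem_inter_iff, Set.mem_empty_iff_false, iff_false]
      rintro ⟨hwd, hdW⟩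
      obtain ⟨U', hU', hwU', hdU'⟩ := hWsub hdW
      exact hdU' (hU'.1 (wayBelow_le hwd) hwU')
end
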